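/- Let $d$ be the dominant-coweight-valued distance on lattices in $\mathcal{K}^n$ (defined by invariant factors), and define the partial order on the coweight lattice $\mathbb{Z}^n$ by $\lambda \geq \mu$ iff $\lambda - \mu$ is a nonnegative integer combination of positive coroots $e_i - e_{i+1}$ plus possibly a multiple of $(1,\ldots,1)$ matching total degree. Then for any lattices $L, M, N$: $d(L,N) \leq d(L,M) + d(M,N)$ in this partial order. -/

import Mathlib

noncomputable section

/-- A lattice in `K^n`, `K = F((t))`. -/
def IsLattice {F : Type*} [Field F] {n : ℕ}
    (L : Submodule (PowerSeries F) (Fin n → LaurentSeries F)) : Prop :=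
  L.FG ∧ Submodule.span (LaurentSeries F) (L : Set (Fin n → LaurentSeries F)) = ⊤

/-- The standard lattice `O^n`. -/
def stdLattice (F : Type*) [Field F] (n : ℕ) :
    Submodule (PowerSeries F) (Fin n → LaurentSeries F) :=
  Submodule.span (PowerSeries F)
    (Set.range fun i => Pi.single i (1 : LaurentSeries F))

/-- The diagonal lattice spanned by `t^{-a i} e i`. -/
def diagLattice {F : Type*} [Field F] {n : ℕ} (a : Fin n → ℤ) :
    Submodule (PowerSeries F) (Fin n → LaurentSeries F) :=
  Submodule.span (PowerSeries F)
    (Set.range fun i => Pi.single i (HahnSeries.single (-(a i)) (1 : F)))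

/-- The image of a lattice under `g ∈ GL_n(K)`. -/
def mapGL {F : Type*} [Field F] {n : ℕ}
    (g : GL (Fin n) (LaurentSeries F))
    (L : Submodule (PowerSeries F) (Fin n → LaurentSeries F)) :
    Submodule (PowerSeries F) (Fin n → LaurentSeries F) :=
  Submodule.map ((Matrix.toLin' (g : Matrix (Fin n) (Fin n) (LaurentSeries F))).restrictScalars
    (PowerSeries F)) L

namespace TriAux
open HahnSeries Matrix Finset

variable {F : Type*} [Field F] {n : ℕ}

/-! ### Integrality and orderTop lemmas -/

def IsInt (x : LaurentSeries F) : Prop := 0 ≤ x.orderTop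

lemma le_orderTop_of_coeff {x : LaurentSeries F} {s : ℤ}
    (h : ∀ i < s, x.coeff i = 0) : (s : WithTop ℤ) ≤ x.orderTop := by
  by_contra hlt
  push_neg at hlt
  rcases WithTop.lt_iff_exists_coe.mp hlt with ⟨g, hg, hgs⟩
  exact coeff_orderTop_ne hg (h g (by exact_mod_cast hgs))

lemma isInt_algebraMap (p : PowerSeries F) :
    IsInt (algebraMap (PowerSeries F) (LaurentSeries F) p) := by
  have : algebraMap (PowerSeries F) (LaurentSeries F) p = ofPowerSeries ℤ F p := rfl
  rw [IsInt, this]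
  have h0 : (0 : WithTop ℤ) = ((0 : ℤ) : WithTop ℤ) := rfl
  rw [h0]
  apply le_orderTop_of_coeff
  intro i hi
  rw [ofPowerSeries_apply]
  apply embDomain_notin_range
  rintro ⟨m, hm⟩
  simp at hm
  omega

lemma IsInt.add {x y : LaurentSeries F} (hx : IsInt x) (hy : IsInt y) : IsInt (x + y) :=
  le_trans (le_min hx hy) min_orderTop_le_orderTop_add

lemma IsInt.mul {x y : LaurentSeries F} (hx : IsInt x) (hy : IsInt y) : IsInt (x * y) := by
  refine le_trans ?_ orderTop_add_le_mul
  calc (0 : WithTop ℤ) = 0 + 0 := by simp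
  _ ≤ x.orderTop + y.orderTop := add_le_add hx hy

lemma IsInt.zero : IsInt (0 : LaurentSeries F) := by simp [IsInt]

lemma IsInt.one : IsInt (1 : LaurentSeries F) := by simp [IsInt, orderTop_one]

lemma IsInt.neg {x : LaurentSeries F} (hx : IsInt x) : IsInt (-x) := by
  rwa [IsInt, orderTop_neg]

lemma orderTop_sum_ge {α : Type*} {s : Finset α} {f : α → LaurentSeries F} {c : WithTop ℤ}
    (h : ∀ i ∈ s, c ≤ (f i).orderTop) : c ≤ (∑ i ∈ s, f i).orderTop := by
  classical
  induction s using Finset.cons_induction with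
  | empty => simp
  | cons j s hj ih =>
    rw [Finset.sum_cons]
    refine le_trans (le_min (h j (by simp)) (ih fun i hi => h i (by simp [hi]))) ?_
    exact min_orderTop_le_orderTop_add

lemma orderTop_prod_ge {α : Type*} {s : Finset α} {f : α → LaurentSeries F} {c : α → ℤ}
    (h : ∀ i ∈ s, (c i : WithTop ℤ) ≤ (f i).orderTop) :
    ((∑ i ∈ s, c i : ℤ) : WithTop ℤ) ≤ (∏ i ∈ s, f i).orderTop := by
  classical
  induction s using Finset.cons_induction with
  | empty => simp [orderTop_one]
  | cons j s hj ih =>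
    rw [Finset.prod_cons, Finset.sum_cons]
    refine le_trans ?_ orderTop_add_le_mul
    push_cast
    refine add_le_add ?_ ?_ <;> push_cast at *
    exacts [h j (by simp), ih fun i hi => h i (by simp [hi])]

lemma isInt_prod {α : Type*} {s : Finset α} {f : α → LaurentSeries F}
    (h : ∀ i ∈ s, IsInt (f i)) : IsInt (∏ i ∈ s, f i) := by
  have := orderTop_prod_ge (f := f) (c := fun _ => (0 : ℤ)) (fun i hi => h i hi)
  simpa [IsInt] using this

lemma prod_single_one {α : Type*} (s : Finset α) (g : α → ℤ) :
    (∏ i ∈ s, (HahnSeries.single (g i) (1 : F))) = HahnSeries.single (∑ i ∈ s, g i) 1 := by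
  classical
  induction s using Finset.cons_induction with
  | empty => simp
  | cons j s hj ih => rw [Finset.prod_cons, Finset.sum_cons, ih, single_mul_single, one_mul]

lemma isInt_det {l : ℕ} {M : Matrix (Fin l) (Fin l) (LaurentSeries F)}
    (h : ∀ i j, IsInt (M i j)) : IsInt M.det := by
  rw [Matrix.det_apply]
  apply orderTop_sum_ge
  intro σ _
  have hp : IsInt (∏ i, M (σ i) i) := isInt_prod fun i _ => h _ _
  rcases Int.units_eq_one_or (Equiv.Perm.sign σ) with hs | hs <;> rw [hs]
  · simpa [Units.smul_def, IsInt] using hp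
  · simpa [Units.smul_def, IsInt] using hp.neg

lemma orderTop_mul_eq {x y : LaurentSeries F} (hx : x ≠ 0) (hy : y ≠ 0) :
    (x * y).orderTop = x.orderTop + y.orderTop := by
  rw [← order_eq_orderTop_of_ne_zero hx, ← order_eq_orderTop_of_ne_zero hy,
    ← order_eq_orderTop_of_ne_zero (mul_ne_zero hx hy), order_mul hx hy, WithTop.coe_add]

/-! ### mapGL and lattices -/

lemma toLinR_mul (A B : Matrix (Fin n) (Fin n) (LaurentSeries F)) :
    ((Matrix.toLin' (A * B)).restrictScalars (PowerSeries F)) =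
      ((Matrix.toLin' A).restrictScalars (PowerSeries F)).comp
        ((Matrix.toLin' B).restrictScalars (PowerSeries F)) := by
  ext v
  simp [Matrix.toLin'_mul]

lemma mapGL_mul (g h : GL (Fin n) (LaurentSeries F))
    (P : Submodule (PowerSeries F) (Fin n → LaurentSeries F)) :
    mapGL (g * h) P = mapGL g (mapGL h P) := by
  unfold mapGL
  rw [Units.val_mul, toLinR_mul, Submodule.map_comp]

lemma mapGL_one (P : Submodule (PowerSeries F) (Fin n → LaurentSeries F)) :
    mapGL (1 : GL (Fin n) (LaurentSeries F)) P = P := by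
  unfold mapGL
  have : ((Matrix.toLin' ((1 : GL (Fin n) (LaurentSeries F)) : Matrix (Fin n) (Fin n)
      (LaurentSeries F))).restrictScalars (PowerSeries F)) = LinearMap.id := by
    ext v
    simp [Matrix.toLin'_one]
  rw [this, Submodule.map_id]

lemma mapGL_inv (g : GL (Fin n) (LaurentSeries F))
    {P Q : Submodule (PowerSeries F) (Fin n → LaurentSeries F)}
    (h : mapGL g P = Q) : mapGL g⁻¹ Q = P := by
  rw [← h, ← mapGL_mul, inv_mul_cancel, mapGL_one]

lemma mem_std (i : Fin n) : Pi.single i (1 : LaurentSeries F) ∈ stdLattice F n :=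
  Submodule.subset_span ⟨i, rfl⟩

def intSub (F : Type*) [Field F] (n : ℕ) :
    Submodule (PowerSeries F) (Fin n → LaurentSeries F) where
  carrier := {v | ∀ i, IsInt (v i)}
  add_mem' hx hy i := by rw [Pi.add_apply]; exact (hx i).add (hy i)
  zero_mem' i := by simpa using IsInt.zero
  smul_mem' p v hv := by
    intro i
    rw [Pi.smul_apply, Algebra.smul_def]
    exact (isInt_algebraMap p).mul (hv i)

lemma std_le_int : stdLattice F n ≤ intSub F n := by
  rw [stdLattice, Submodule.span_le]
  rintro _ ⟨i, rfl⟩ j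
  show IsInt _
  simp only []
  rcases eq_or_ne j i with rfl | hne
  · simpa using IsInt.one
  · rw [Pi.single_eq_of_ne hne]
    exact IsInt.zero

lemma entries_int_of_mapGL_std {g : GL (Fin n) (LaurentSeries F)}
    (h : mapGL g (stdLattice F n) = stdLattice F n) :
    ∀ i j, IsInt ((g : Matrix (Fin n) (Fin n) (LaurentSeries F)) i j) := by
  intro i j
  have hc : Matrix.toLin' (g : Matrix (Fin n) (Fin n) (LaurentSeries F)) (Pi.single j 1) ∈
      mapGL g (stdLattice F n) := ⟨Pi.single j 1, mem_std j, rfl⟩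
  rw [h] at hc
  have hv := std_le_int hc i
  rw [Matrix.toLin'_apply, Matrix.mulVec_single] at hv
  simpa using hv

def DU (a : Fin n → ℤ) : GL (Fin n) (LaurentSeries F) where
  val := Matrix.diagonal fun i => HahnSeries.single (-(a i)) 1
  inv := Matrix.diagonal fun i => HahnSeries.single (a i) 1
  val_inv := by
    rw [Matrix.diagonal_mul_diagonal]
    simp [HahnSeries.single_mul_single]
  inv_val := by
    rw [Matrix.diagonal_mul_diagonal]
    simp [HahnSeries.single_mul_single]

lemma mapGL_DU (a : Fin n → ℤ) :
    mapGL (DU (F := F) a) (stdLattice F n) = diagLattice a := by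
  rw [stdLattice, diagLattice, mapGL, Submodule.map_span]
  congr 1
  rw [← Set.range_comp]
  apply congrArg
  funext i
  show Matrix.toLin' ((DU (F := F) a : Matrix (Fin n) (Fin n) (LaurentSeries F))) _ = _
  rw [Matrix.toLin'_apply]
  show (DU (F := F) a : Matrix (Fin n) (Fin n) (LaurentSeries F)).mulVec (Pi.single i 1) = _
  rw [Matrix.mulVec_single]
  funext j
  rcases eq_or_ne j i with rfl | hne
  · simp [DU, Matrix.diagonal_apply_eq]
  · simp [DU, Matrix.diagonal_apply_ne _ hne, Pi.single_eq_of_ne hne]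

/-! ### Minors -/

/-- All (possibly degenerate) `l×l` minors have `orderTop ≥ s`. -/
def minorsGE (A : Matrix (Fin n) (Fin n) (LaurentSeries F)) (l : ℕ) (s : WithTop ℤ) : Prop :=
  ∀ r t : Fin l → Fin n, s ≤ ((A.submatrix r t).det).orderTop

lemma det_mul_submatrix {l : ℕ} (k A : Matrix (Fin n) (Fin n) (LaurentSeries F))
    (r t : Fin l → Fin n) :
    ((k * A).submatrix r t).det
      = ∑ f : Fin l → Fin n, (∏ i, k (r i) (f i)) * (A.submatrix f t).det := by
  have h1 : ((k * A).submatrix r t)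
      = Matrix.of fun i => ∑ m : Fin n, k (r i) m • fun j => A m (t j) := by
    ext i j
    simp [Matrix.mul_apply, Finset.sum_apply]
  rw [h1]
  show Matrix.detRowAlternating (fun i => ∑ m : Fin n, k (r i) m • fun j => A m (t j)) = _
  have hms := (Matrix.detRowAlternating (R := LaurentSeries F)
    (n := Fin l)).toMultilinearMap.map_sum (g := fun i m => k (r i) m • fun j => A m (t j))
  simp only [AlternatingMap.coe_multilinearMap] at hms
  rw [hms]
  refine Finset.sum_congr rfl fun f _ => ?_
  have hsm := (Matrix.detRowAlternating (R := LaurentSeries F)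
    (n := Fin l)).toMultilinearMap.map_smul_univ (fun i => k (r i) (f i))
    (fun i j => A (f i) (t j))
  simp only [AlternatingMap.coe_multilinearMap] at hsm
  rw [hsm, smul_eq_mul]
  rfl

lemma minorsGE_mul_left {l : ℕ} {k A : Matrix (Fin n) (Fin n) (LaurentSeries F)}
    {s : WithTop ℤ} (hk : ∀ i j, IsInt (k i j)) (hA : minorsGE A l s) :
    minorsGE (k * A) l s := by
  intro r t
  rw [det_mul_submatrix]
  apply orderTop_sum_ge
  intro f _
  have h1 : IsInt (∏ i, k (r i) (f i)) := isInt_prod fun i _ => hk _ _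
  calc s = 0 + s := by rw [zero_add]
  _ ≤ (∏ i, k (r i) (f i)).orderTop + ((A.submatrix f t).det).orderTop :=
      add_le_add h1 (hA f t)
  _ ≤ _ := orderTop_add_le_mul

lemma minorsGE_transpose {l : ℕ} {A : Matrix (Fin n) (Fin n) (LaurentSeries F)}
    {s : WithTop ℤ} (hA : minorsGE A l s) : minorsGE Aᵀ l s := by
  intro r t
  rw [← Matrix.transpose_submatrix, Matrix.det_transpose]
  exact hA t r

lemma minorsGE_mul_right {l : ℕ} {k A : Matrix (Fin n) (Fin n) (LaurentSeries F)}
    {s : WithTop ℤ} (hA : minorsGE A l s) (hk : ∀ i j, IsInt (k i j)) :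
    minorsGE (A * k) l s := by
  have h := minorsGE_mul_left (k := kᵀ) (A := Aᵀ) (fun i j => hk j i) (minorsGE_transpose hA)
  have h2 : minorsGE ((A * k)ᵀ) l s := by rwa [Matrix.transpose_mul]
  intro r t
  rw [← Matrix.det_transpose, Matrix.transpose_submatrix]
  exact h2 t r

/-! ### Sums over antitone sequences -/

lemma strictMono_val_le {l : ℕ} {f : Fin l → Fin n} (hf : StrictMono f) :
    ∀ i : Fin l, (i : ℕ) ≤ (f i : ℕ) := by
  have key : ∀ k : ℕ, ∀ i : Fin l, (i : ℕ) = k → k ≤ (f i : ℕ) := by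
    intro k
    induction k with
    | zero => intro i _; omega
    | succ m ih =>
      intro i hi
      have hm : m < l := by omega
      have h1 := ih ⟨m, hm⟩ rfl
      have h2 : f ⟨m, hm⟩ < f i := hf (by rw [Fin.lt_def]; simp; omega)
      rw [Fin.lt_def] at h2
      omega
  exact fun i => key (i : ℕ) i rfl

lemma filter_sum_eq {l : ℕ} (hl : l ≤ n) (h : Fin n → ℤ) :
    ∑ m ∈ Finset.univ.filter (fun m : Fin n => (m : ℕ) < l), h m
      = ∑ i : Fin l, h (Fin.castLE hl i) := by
  refine Finset.sum_bij' (fun m hm => (⟨(m : ℕ), (Finset.mem_filter.mp hm).2⟩ : Fin l))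
    (fun i _ => Fin.castLE hl i) ?_ ?_ ?_ ?_ ?_ <;> intro x hx
  · simp
  · simp [x.isLt]
  · ext; simp
  · ext; simp
  · congr 1

lemma sum_inj_le {l : ℕ} (hl : l ≤ n) {a : Fin n → ℤ} (ha : Antitone a)
    {r : Fin l → Fin n} (hr : Function.Injective r) :
    ∑ i : Fin l, a (r i) ≤ ∑ m ∈ Finset.univ.filter (fun m : Fin n => (m : ℕ) < l), a m := by
  classical
  set S : Finset (Fin n) := Finset.image r Finset.univ with hS
  have hcard : S.card = l := by
    rw [hS, Finset.card_image_of_injective _ hr, Finset.card_univ, Fintype.card_fin]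
  set e := S.orderIsoOfFin hcard with he
  have h1 : ∑ i : Fin l, a (r i) = ∑ m ∈ S, a m := by
    rw [hS]
    rw [Finset.sum_image (fun x _ y _ h => hr h)]
  have h2 : ∑ m ∈ S, a m = ∑ i : Fin l, a (e i) := by
    rw [← Finset.sum_coe_sort S (fun m => a m)]
    exact (Equiv.sum_comp e.toEquiv fun x => a (x : Fin n)).symm
  have hmono : StrictMono fun i : Fin l => ((e i : Fin n)) := fun x y hxy => e.strictMono hxy
  have h3 : ∀ i : Fin l, a ((e i : Fin n)) ≤ a (Fin.castLE hl i) := by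
    intro i
    apply ha
    rw [Fin.le_def]
    exact strictMono_val_le hmono i
  rw [h1, h2, filter_sum_eq hl]
  exact Finset.sum_le_sum fun i _ => h3 i

/-! ### Minor bounds for sandwiched matrices -/

lemma submatrix_diag_mul {l : ℕ} (d : Fin n → LaurentSeries F)
    (B : Matrix (Fin n) (Fin n) (LaurentSeries F)) (r t : Fin l → Fin n) :
    ((Matrix.diagonal d * B).submatrix r t)
      = Matrix.diagonal (fun i => d (r i)) * (B.submatrix r t) := by
  ext i j
  simp [Matrix.diagonal_mul]

lemma submatrix_mul_diag {l : ℕ} (d : Fin n → LaurentSeries F)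
    (B : Matrix (Fin n) (Fin n) (LaurentSeries F)) (r t : Fin l → Fin n) :
    ((B * Matrix.diagonal d).submatrix r t)
      = (B.submatrix r t) * Matrix.diagonal (fun j => d (t j)) := by
  ext i j
  simp [Matrix.mul_diagonal]

lemma submatrix_diagonal_inj {l : ℕ} (d : Fin n → LaurentSeries F)
    {r : Fin l → Fin n} (hr : Function.Injective r) :
    (Matrix.diagonal d).submatrix r r = Matrix.diagonal (fun i => d (r i)) := by
  ext i j
  rcases eq_or_ne i j with rfl | hne
  · simp
  · rw [Matrix.submatrix_apply, Matrix.diagonal_apply_ne _ (fun h => hne (hr h)),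
      Matrix.diagonal_apply_ne _ hne]

lemma minorsGE_sandwich {l : ℕ} (hl : l ≤ n) {a b : Fin n → ℤ} (ha : Antitone a)
    (hb : Antitone b) {Y : Matrix (Fin n) (Fin n) (LaurentSeries F)}
    (hY : ∀ i j, IsInt (Y i j)) :
    minorsGE ((Matrix.diagonal fun i => HahnSeries.single (-(a i)) (1 : F)) * Y *
        (Matrix.diagonal fun i => HahnSeries.single (-(b i)) (1 : F))) l
      (((-(∑ m ∈ Finset.univ.filter (fun m : Fin n => (m : ℕ) < l), a m)
        - ∑ m ∈ Finset.univ.filter (fun m : Fin n => (m : ℕ) < l), b m : ℤ) : WithTop ℤ)) := by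
  intro r t
  by_cases hr : Function.Injective r
  · by_cases ht : Function.Injective t
    · have h1 : (((Matrix.diagonal fun i => HahnSeries.single (-(a i)) (1 : F)) * Y *
          (Matrix.diagonal fun i => HahnSeries.single (-(b i)) (1 : F))).submatrix r t)
          = (Matrix.diagonal fun i => HahnSeries.single (-(a (r i))) (1 : F)) *
            ((Y.submatrix r t) * Matrix.diagonal fun j => HahnSeries.single (-(b (t j))) 1) := by
        rw [mul_assoc, submatrix_diag_mul, submatrix_mul_diag]
      rw [h1, Matrix.det_mul, Matrix.det_mul, Matrix.det_diagonal, Matrix.det_diagonal,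
        prod_single_one, prod_single_one]
      have hsa := sum_inj_le hl ha hr
      have hsb := sum_inj_le hl hb ht
      have hYdet : ((0 : ℤ) : WithTop ℤ) ≤ ((Y.submatrix r t).det).orderTop := by
        simpa [IsInt] using (isInt_det fun i j => hY _ _ :
          IsInt ((Y.submatrix r t).det))
      calc ((-(∑ m ∈ Finset.univ.filter (fun m : Fin n => (m : ℕ) < l), a m)
            - ∑ m ∈ Finset.univ.filter (fun m : Fin n => (m : ℕ) < l), b m : ℤ) : WithTop ℤ)
          ≤ (((∑ i : Fin l, -(a (r i))) + ((0 : ℤ) + ∑ j : Fin l, -(b (t j))) : ℤ) :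
              WithTop ℤ) := by
            rw [WithTop.coe_le_coe, Finset.sum_neg_distrib, Finset.sum_neg_distrib]
            omega
      _ = ((∑ i : Fin l, -(a (r i)) : ℤ) : WithTop ℤ)
            + (((0 : ℤ) : WithTop ℤ) + ((∑ j : Fin l, -(b (t j)) : ℤ) : WithTop ℤ)) := by
            push_cast
            rfl
      _ ≤ (HahnSeries.single (∑ i : Fin l, -(a (r i))) (1 : F)).orderTop
            + (((Y.submatrix r t).det).orderTop
              + (HahnSeries.single (∑ j : Fin l, -(b (t j))) (1 : F)).orderTop) :=
            add_le_add orderTop_single_le (add_le_add hYdet orderTop_single_le)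
      _ ≤ (HahnSeries.single (∑ i : Fin l, -(a (r i))) (1 : F)).orderTop
            + ((Y.submatrix r t).det *
                HahnSeries.single (∑ j : Fin l, -(b (t j))) (1 : F)).orderTop :=
            add_le_add_right orderTop_add_le_mul _
      _ ≤ _ := orderTop_add_le_mul
    · obtain ⟨i, j, hij, hne⟩ := Function.not_injective_iff.mp ht
      have hz : ((((Matrix.diagonal fun i => HahnSeries.single (-(a i)) (1 : F)) * Y *
          (Matrix.diagonal fun i => HahnSeries.single (-(b i)) (1 : F))).submatrix r t)).det = 0 :=
        Matrix.det_zero_of_column_eq hne fun k => by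
          rw [Matrix.submatrix_apply, Matrix.submatrix_apply, hij]
      rw [hz, orderTop_zero]
      exact le_top
  · obtain ⟨i, j, hij, hne⟩ := Function.not_injective_iff.mp hr
    have hz : ((((Matrix.diagonal fun i => HahnSeries.single (-(a i)) (1 : F)) * Y *
        (Matrix.diagonal fun i => HahnSeries.single (-(b i)) (1 : F))).submatrix r t)).det = 0 :=
      Matrix.det_zero_of_row_eq hne (funext fun k => by
        rw [Matrix.submatrix_apply, Matrix.submatrix_apply, hij])
    rw [hz, orderTop_zero]
    exact le_top

end TriAux

open TriAux HahnSeries Matrix Finset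

/-- Triangle inequality for the dominant-coweight distance on lattices:
if `d(L,M) = a`, `d(M,N) = b`, `d(L,N) = c` (witnessed by simultaneous
diagonalizations), then `c ≤ a + b` in the dominance (coroot) order: all partial
sums satisfy `∑_{m<l} c m ≤ ∑_{m<l} (a m + b m)`, with equality of total sums. -/
theorem dist_triangle_dominance {F : Type*} [Field F] {n : ℕ}
    (L M N : Submodule (PowerSeries F) (Fin n → LaurentSeries F))
    (hL : IsLattice L) (hM : IsLattice M) (hN : IsLattice N)
    (a b c : Fin n → ℤ) (ha : Antitone a) (hb : Antitone b) (hc : Antitone c)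
    (g₁ g₂ g₃ : GL (Fin n) (LaurentSeries F))
    (h₁L : mapGL g₁ L = stdLattice F n) (h₁M : mapGL g₁ M = diagLattice a)
    (h₂M : mapGL g₂ M = stdLattice F n) (h₂N : mapGL g₂ N = diagLattice b)
    (h₃L : mapGL g₃ L = stdLattice F n) (h₃N : mapGL g₃ N = diagLattice c) :
    (∀ l : ℕ, l ≤ n →
      ∑ m ∈ Finset.univ.filter (fun m : Fin n => (m : ℕ) < l), c m ≤
        ∑ m ∈ Finset.univ.filter (fun m : Fin n => (m : ℕ) < l), (a m + b m)) ∧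
    ∑ m, c m = ∑ m, (a m + b m) := by
  classical
  have hk0 : mapGL (g₃ * g₁⁻¹) (stdLattice F n) = stdLattice F n := by
    rw [mapGL_mul, mapGL_inv g₁ h₁L, h₃L]
  have hk1 : mapGL (g₂ * (g₁⁻¹ * DU a)) (stdLattice F n) = stdLattice F n := by
    rw [mapGL_mul, mapGL_mul, mapGL_DU, mapGL_inv g₁ h₁M, h₂M]
  have hk2 : mapGL ((DU c)⁻¹ * (g₃ * (g₂⁻¹ * DU b))) (stdLattice F n) = stdLattice F n := by
    rw [mapGL_mul, mapGL_mul, mapGL_mul, mapGL_DU, mapGL_inv g₂ h₂N, h₃N,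
      mapGL_inv (DU c) (mapGL_DU c)]
  have hu : DU (F := F) c * ((DU c)⁻¹ * (g₃ * (g₂⁻¹ * DU b)))
      = (g₃ * g₁⁻¹) * (DU a * (g₂ * (g₁⁻¹ * DU a))⁻¹ * DU b) := by
    group
  have hmat : (Matrix.diagonal fun i => HahnSeries.single (-(c i)) (1 : F)) *
        ((((DU c)⁻¹ * (g₃ * (g₂⁻¹ * DU b))) : GL (Fin n) (LaurentSeries F)) :
          Matrix (Fin n) (Fin n) (LaurentSeries F))
      = ((g₃ * g₁⁻¹ : GL (Fin n) (LaurentSeries F)) : Matrix (Fin n) (Fin n) (LaurentSeries F)) *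
        ((Matrix.diagonal fun i => HahnSeries.single (-(a i)) (1 : F)) *
          (((g₂ * (g₁⁻¹ * DU a))⁻¹ : GL (Fin n) (LaurentSeries F)) :
            Matrix (Fin n) (Fin n) (LaurentSeries F)) *
          (Matrix.diagonal fun i => HahnSeries.single (-(b i)) (1 : F))) := by
    have h := congrArg (Units.val) hu
    simp only [Units.val_mul] at h
    exact h
  have hk0int := entries_int_of_mapGL_std hk0
  have hk1invint := entries_int_of_mapGL_std (mapGL_inv _ hk1)
  have hk2invint := entries_int_of_mapGL_std (mapGL_inv _ hk2)
  have hdetu : ∀ u : GL (Fin n) (LaurentSeries F),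
      mapGL u (stdLattice F n) = stdLattice F n →
      ((u : Matrix (Fin n) (Fin n) (LaurentSeries F)).det ≠ 0 ∧
        ((u : Matrix (Fin n) (Fin n) (LaurentSeries F)).det).orderTop = 0) := by
    intro u hustd
    have h1 : (u : Matrix (Fin n) (Fin n) (LaurentSeries F)).det *
        ((u⁻¹ : GL (Fin n) (LaurentSeries F)) : Matrix (Fin n) (Fin n) (LaurentSeries F)).det
        = 1 := by
      rw [← Matrix.det_mul, ← Units.val_mul, mul_inv_cancel, Units.val_one, Matrix.det_one]
    have hne := left_ne_zero_of_mul_eq_one h1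
    have hne2 := right_ne_zero_of_mul_eq_one h1
    have hx : IsInt ((u : Matrix (Fin n) (Fin n) (LaurentSeries F)).det) :=
      isInt_det (entries_int_of_mapGL_std hustd)
    have hy : IsInt (((u⁻¹ : GL (Fin n) (LaurentSeries F)) :
        Matrix (Fin n) (Fin n) (LaurentSeries F)).det) :=
      isInt_det (entries_int_of_mapGL_std (mapGL_inv u hustd))
    refine ⟨hne, le_antisymm ?_ hx⟩
    have hxy : ((u : Matrix (Fin n) (Fin n) (LaurentSeries F)).det).orderTop +
        (((u⁻¹ : GL (Fin n) (LaurentSeries F)) :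
          Matrix (Fin n) (Fin n) (LaurentSeries F)).det).orderTop = 0 := by
      rw [← orderTop_mul_eq hne hne2, h1, orderTop_one]
    calc ((u : Matrix (Fin n) (Fin n) (LaurentSeries F)).det).orderTop
        = ((u : Matrix (Fin n) (Fin n) (LaurentSeries F)).det).orderTop + 0 := (add_zero _).symm
    _ ≤ ((u : Matrix (Fin n) (Fin n) (LaurentSeries F)).det).orderTop +
        (((u⁻¹ : GL (Fin n) (LaurentSeries F)) :
          Matrix (Fin n) (Fin n) (LaurentSeries F)).det).orderTop := add_le_add_right hy _
    _ = 0 := hxy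
  constructor
  · -- partial sums
    intro l hl
    have hsand := minorsGE_sandwich (F := F) hl ha hb hk1invint
    have hX := minorsGE_mul_left hk0int hsand
    rw [← hmat] at hX
    have hDc := minorsGE_mul_right hX hk2invint
    have hsimp : ((Matrix.diagonal fun i => HahnSeries.single (-(c i)) (1 : F)) *
          ((((DU c)⁻¹ * (g₃ * (g₂⁻¹ * DU b))) : GL (Fin n) (LaurentSeries F)) :
            Matrix (Fin n) (Fin n) (LaurentSeries F))) *
          (((((DU c)⁻¹ * (g₃ * (g₂⁻¹ * DU b)))⁻¹ : GL (Fin n) (LaurentSeries F)) :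
            Matrix (Fin n) (Fin n) (LaurentSeries F)))
        = Matrix.diagonal fun i => HahnSeries.single (-(c i)) (1 : F) := by
      rw [mul_assoc, ← Units.val_mul, mul_inv_cancel, Units.val_one, mul_one]
    rw [hsimp] at hDc
    have h5 := hDc (Fin.castLE hl) (Fin.castLE hl)
    rw [submatrix_diagonal_inj _ (Fin.castLE_injective hl), Matrix.det_diagonal,
      prod_single_one, orderTop_single one_ne_zero, WithTop.coe_le_coe,
      Finset.sum_neg_distrib] at h5
    have hfc := filter_sum_eq hl c
    rw [Finset.sum_add_distrib]
    linarith [h5, hfc.le, hfc.ge]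
  · -- total sums
    have hdet := congrArg Matrix.det hmat
    simp only [Matrix.det_mul, Matrix.det_diagonal] at hdet
    rw [prod_single_one, prod_single_one, prod_single_one] at hdet
    have hk1invdet := hdetu _ (mapGL_inv _ hk1)
    have hk2det := hdetu _ hk2
    have hk0det := hdetu _ hk0
    have hL' : ((HahnSeries.single (∑ i, -(c i)) (1 : F)) *
          ((((DU c)⁻¹ * (g₃ * (g₂⁻¹ * DU b))) : GL (Fin n) (LaurentSeries F)) :
            Matrix (Fin n) (Fin n) (LaurentSeries F)).det).orderTop
        = ((∑ i, -(c i) : ℤ) : WithTop ℤ) := by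
      rw [orderTop_mul_eq (single_ne_zero one_ne_zero) hk2det.1,
        orderTop_single one_ne_zero, hk2det.2, add_zero]
    have hR' : (((g₃ * g₁⁻¹ : GL (Fin n) (LaurentSeries F)) :
            Matrix (Fin n) (Fin n) (LaurentSeries F)).det *
          ((HahnSeries.single (∑ i, -(a i)) (1 : F)) *
            (((g₂ * (g₁⁻¹ * DU a))⁻¹ : GL (Fin n) (LaurentSeries F)) :
              Matrix (Fin n) (Fin n) (LaurentSeries F)).det *
            (HahnSeries.single (∑ i, -(b i)) (1 : F)))).orderTop
        = ((∑ i, -(a i) + ∑ i, -(b i) : ℤ) : WithTop ℤ) := by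
      rw [orderTop_mul_eq hk0det.1 (mul_ne_zero (mul_ne_zero (single_ne_zero one_ne_zero)
          hk1invdet.1) (single_ne_zero one_ne_zero)),
        orderTop_mul_eq (mul_ne_zero (single_ne_zero one_ne_zero) hk1invdet.1)
          (single_ne_zero one_ne_zero),
        orderTop_mul_eq (single_ne_zero one_ne_zero) hk1invdet.1,
        orderTop_single one_ne_zero, orderTop_single one_ne_zero,
        hk0det.2, hk1invdet.2, add_zero, zero_add, ← WithTop.coe_add]
    have hfin : ((∑ i, -(c i) : ℤ) : WithTop ℤ) = ((∑ i, -(a i) + ∑ i, -(b i) : ℤ) : WithTop ℤ) := by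
      rw [← hL', ← hR', hdet]
    rw [WithTop.coe_inj] at hfin
    rw [Finset.sum_neg_distrib, Finset.sum_neg_distrib, Finset.sum_neg_distrib] at hfin
    rw [Finset.sum_add_distrib]
    linarith [hfin]


end
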